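/- If B = (b_1,...,b_n) is a singleton board for the positive integer m, then the sum over k from 0 to n of r_{k,m}(B) · x↓_{n-k,m} equals the product over j from 1 to n of (x + b_j − (j−1)m). -/
import Mathlib


/-- The `m`-falling factorial `x↓_{n,m} = x(x-m)(x-2m)⋯(x-(n-1)m)`. -/
def fallFact (x : ℤ) (n m : ℕ) : ℤ := ∏ i ∈ Finset.range n, (x - (m : ℤ) * i)

/-- `(i, j)` (row `i`, column `j`, both 1-indexed) is a cell of the Ferrers board
with column heights `b 1, …, b n`. -/
def IsCell (b : ℕ → ℕ) (n : ℕ) (c : ℕ × ℕ) : Prop :=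
  1 ≤ c.2 ∧ c.2 ≤ n ∧ 1 ≤ c.1 ∧ c.1 ≤ b c.2

/-- An `m`-level rook placement: no two rooks in the same column or level. -/
def IsMLevelPlacement (m : ℕ) (b : ℕ → ℕ) (n : ℕ) (P : Finset (ℕ × ℕ)) : Prop :=
  (∀ c ∈ P, IsCell b n c) ∧
  (∀ c ∈ P, ∀ c' ∈ P, c.2 = c'.2 → c = c') ∧
  (∀ c ∈ P, ∀ c' ∈ P, (c.1 - 1) / m = (c'.1 - 1) / m → c = c')

/-- `r_{k,m}(B)`: the number of `m`-level rook placements with `k` rooks. -/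
noncomputable def rkm (m : ℕ) (b : ℕ → ℕ) (n k : ℕ) : ℕ :=
  Nat.card {P : Finset (ℕ × ℕ) // IsMLevelPlacement m b n P ∧ P.card = k}

/-- A singleton board: if `b j` is not a multiple of `m` (and `j < n`) then
`⌊b_{j+1}⌋_m > ⌊b_j⌋_m`, where `⌊x⌋_m = m * (x / m)`. -/
def IsSingletonBoard (m : ℕ) (b : ℕ → ℕ) (n : ℕ) : Prop :=
  ∀ j, 1 ≤ j → j < n → ¬ (m ∣ b j) → m * (b j / m) < m * (b (j + 1) / m)

open Finset

open Classical in
/-- The finset of `k`-rook placements inside the bounding box. -/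
noncomputable def plc (m : ℕ) (b : ℕ → ℕ) (n k : ℕ) : Finset (Finset (ℕ × ℕ)) :=
  ((Finset.Icc 1 (b n) ×ˢ Finset.Icc 1 n).powerset).filter
    (fun P => IsMLevelPlacement m b n P ∧ P.card = k)

lemma mem_plc {m n k : ℕ} {b : ℕ → ℕ}
    (hmono : ∀ j k, 1 ≤ j → j ≤ k → k ≤ n → b j ≤ b k) {P : Finset (ℕ × ℕ)} :
    P ∈ plc m b n k ↔ IsMLevelPlacement m b n P ∧ P.card = k := by
  classical
  constructor
  · intro h
    exact (Finset.mem_filter.mp h).2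
  · intro h
    refine Finset.mem_filter.mpr ⟨Finset.mem_powerset.mpr ?_, h⟩
    intro c hc
    obtain ⟨h1, h2, h3, h4⟩ := h.1.1 c hc
    refine Finset.mem_product.mpr ⟨Finset.mem_Icc.mpr ⟨h3, ?_⟩, Finset.mem_Icc.mpr ⟨h1, h2⟩⟩
    exact le_trans h4 (hmono c.2 n h1 h2 le_rfl)

lemma rkm_eq_card {m n k : ℕ} {b : ℕ → ℕ}
    (hmono : ∀ j k, 1 ≤ j → j ≤ k → k ≤ n → b j ≤ b k) :
    rkm m b n k = (plc m b n k).card := by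
  have h : {P : Finset (ℕ × ℕ) | IsMLevelPlacement m b n P ∧ P.card = k}
      = ↑(plc m b n k) := by
    ext P
    simpa using (mem_plc hmono).symm
  calc rkm m b n k
      = Nat.card ↥{P : Finset (ℕ × ℕ) | IsMLevelPlacement m b n P ∧ P.card = k} := rfl
    _ = Nat.card ↥(↑(plc m b n k) : Set (Finset (ℕ × ℕ))) := by rw [h]
    _ = (plc m b n k).card := Nat.card_eq_finsetCard _

lemma plc_zero (m : ℕ) (b : ℕ → ℕ) (n : ℕ) : plc m b n 0 = {∅} := by
  classical
  ext P
  simp only [Finset.mem_singleton]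
  constructor
  · intro h
    have := (Finset.mem_filter.mp h).2.2
    exact Finset.card_eq_zero.mp this
  · rintro rfl
    refine Finset.mem_filter.mpr ⟨Finset.mem_powerset.mpr (Finset.empty_subset _), ?_, rfl⟩
    refine ⟨fun c hc => absurd hc (Finset.notMem_empty c),
      fun c hc => absurd hc (Finset.notMem_empty c),
      fun c hc => absurd hc (Finset.notMem_empty c)⟩

lemma plc_eq_empty_of_gt {m n k : ℕ} {b : ℕ → ℕ} (hk : n < k) : plc m b n k = ∅ := by
  classical
  rw [Finset.eq_empty_iff_forall_notMem]
  intro P hP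
  obtain ⟨hpl, hcard⟩ := (Finset.mem_filter.mp hP).2
  have hinj : Set.InjOn Prod.snd (P : Set (ℕ × ℕ)) := fun c hc c' hc' h =>
    hpl.2.1 c hc c' hc' h
  have h1 : P.card = (P.image Prod.snd).card := (Finset.card_image_of_injOn hinj).symm
  have h2 : P.image Prod.snd ⊆ Finset.Icc 1 n := by
    intro j hj
    obtain ⟨c, hc, rfl⟩ := Finset.mem_image.mp hj
    obtain ⟨a1, a2, _, _⟩ := hpl.1 c hc
    exact Finset.mem_Icc.mpr ⟨a1, a2⟩
  have h3 : (P.image Prod.snd).card ≤ n := by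
    calc (P.image Prod.snd).card ≤ (Finset.Icc 1 n).card := Finset.card_le_card h2
      _ = n := by rw [Nat.card_Icc]; omega
  omega

/-- Characterization of levels as intervals of rows. -/
lemma div_level_iff {m : ℕ} (hm : 0 < m) {r ℓ : ℕ} (hr : 1 ≤ r) :
    (r - 1) / m = ℓ ↔ ℓ * m + 1 ≤ r ∧ r ≤ ℓ * m + m := by
  constructor
  · rintro rfl
    have h1 : (r - 1) / m * m ≤ r - 1 := Nat.div_mul_le_self _ _
    have h2 := Nat.div_add_mod (r - 1) m
    have h3 : (r - 1) % m < m := Nat.mod_lt _ hm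
    constructor
    · omega
    · set q := (r - 1) / m with hq
      have : m * q + (r - 1) % m = r - 1 := h2
      have hmul : q * m = m * q := Nat.mul_comm q m
      omega
  · rintro ⟨h1, h2⟩
    refine Nat.div_eq_of_lt_le ?_ ?_
    · omega
    · have : (ℓ + 1) * m = ℓ * m + m := by ring
      omega

/-- In a singleton board, every rook in the first `n` columns occupies a level
that is fully contained in column `n+1`. -/
lemma level_full {m n : ℕ} (hm : 0 < m) {b : ℕ → ℕ}
    (hmono : ∀ j k, 1 ≤ j → j ≤ k → k ≤ n + 1 → b j ≤ b k)
    (hsing : IsSingletonBoard m b (n + 1)) {Q : Finset (ℕ × ℕ)}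
    (hQ : IsMLevelPlacement m b n Q) {c : ℕ × ℕ} (hc : c ∈ Q) :
    ((c.1 - 1) / m) * m + m ≤ b (n + 1) := by
  obtain ⟨h1, h2, h3, h4⟩ := hQ.1 c hc
  set j := c.2 with hj
  set r := c.1 with hr
  set ℓ := (r - 1) / m with hℓ
  by_contra hcon
  push_neg at hcon
  have hbj : b j ≤ b (n + 1) := hmono j (n + 1) h1 (by omega) le_rfl
  have h5 : ℓ * m ≤ r - 1 := Nat.div_mul_le_self _ _
  -- b (n+1) / m = ℓ
  have hbn1div : b (n + 1) / m = ℓ := by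
    refine Nat.div_eq_of_lt_le (by omega) ?_
    have : (ℓ + 1) * m = ℓ * m + m := by ring
    omega
  have hbjdiv : b j / m = ℓ := by
    refine Nat.div_eq_of_lt_le (by omega) ?_
    have : (ℓ + 1) * m = ℓ * m + m := by ring
    omega
  have hndvd : ¬ m ∣ b j := by
    intro hdvd
    have : m * (b j / m) = b j := Nat.mul_div_cancel' hdvd
    rw [hbjdiv] at this
    have : m * ℓ = ℓ * m := Nat.mul_comm m ℓ
    omega
  have hlt := hsing j h1 (by omega) hndvd
  have hle : b (j + 1) ≤ b (n + 1) := hmono (j + 1) (n + 1) (by omega) (by omega) le_rfl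
  have : b (j + 1) / m ≤ b (n + 1) / m := Nat.div_le_div_right hle
  rw [hbn1div, hbjdiv] at *
  have : m * (b (j + 1) / m) ≤ m * ℓ := Nat.mul_le_mul_left m this
  omega

open Classical in
/-- Rows of column of height `M` whose level is not used by `Q`. -/
noncomputable def avail (m M : ℕ) (Q : Finset (ℕ × ℕ)) : Finset ℕ :=
  (Finset.Icc 1 M).filter (fun r => ∀ c ∈ Q, (r - 1) / m ≠ (c.1 - 1) / m)

lemma mem_avail {m M : ℕ} {Q : Finset (ℕ × ℕ)} {r : ℕ} :
    r ∈ avail m M Q ↔ (1 ≤ r ∧ r ≤ M) ∧ ∀ c ∈ Q, (r - 1) / m ≠ (c.1 - 1) / m := by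
  simp only [avail, Finset.mem_filter, Finset.mem_Icc]

lemma avail_card {m M : ℕ} (hm : 0 < m) {Q : Finset (ℕ × ℕ)}
    (hinj : ∀ c ∈ Q, ∀ c' ∈ Q, (c.1 - 1) / m = (c'.1 - 1) / m → c = c')
    (hfull : ∀ c ∈ Q, ((c.1 - 1) / m) * m + m ≤ M) :
    (avail m M Q).card + Q.card * m = M := by
  classical
  set L : Finset ℕ := Q.image (fun c => (c.1 - 1) / m) with hL
  have hLcard : L.card = Q.card :=
    Finset.card_image_of_injOn (fun c hc c' hc' h => hinj c hc c' hc' h)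
  set blocked : Finset ℕ := L.biUnion (fun ℓ => Finset.Icc (ℓ * m + 1) (ℓ * m + m))
    with hblocked
  have hLfull : ∀ ℓ ∈ L, ℓ * m + m ≤ M := by
    intro ℓ hℓ
    obtain ⟨c, hc, rfl⟩ := Finset.mem_image.mp hℓ
    exact hfull c hc
  have hdisj : ∀ ℓ ∈ L, ∀ ℓ' ∈ L, ℓ ≠ ℓ' →
      Disjoint (Finset.Icc (ℓ * m + 1) (ℓ * m + m)) (Finset.Icc (ℓ' * m + 1) (ℓ' * m + m)) := by
    intro ℓ hℓ ℓ' hℓ' hne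
    rw [Finset.disjoint_left]
    intro r hr hr'
    rw [Finset.mem_Icc] at hr hr'
    have hr1 : 1 ≤ r := by
      have := hr.1; omega
    have e1 : (r - 1) / m = ℓ := (div_level_iff hm hr1).mpr ⟨hr.1, hr.2⟩
    have e2 : (r - 1) / m = ℓ' := (div_level_iff hm hr1).mpr ⟨hr'.1, hr'.2⟩
    exact hne (e1 ▸ e2)
  have hbcard : blocked.card = L.card * m := by
    rw [hblocked, Finset.card_biUnion hdisj]
    calc ∑ ℓ ∈ L, (Finset.Icc (ℓ * m + 1) (ℓ * m + m)).card
        = ∑ _ℓ ∈ L, m :=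
          Finset.sum_congr rfl (fun ℓ _ => by rw [Nat.card_Icc]; omega)
      _ = L.card * m := by rw [Finset.sum_const, smul_eq_mul]
  have hbsub : blocked ⊆ Finset.Icc 1 M := by
    intro r hr
    obtain ⟨ℓ, hℓ, hrmem⟩ := Finset.mem_biUnion.mp hr
    rw [Finset.mem_Icc] at hrmem ⊢
    have := hLfull ℓ hℓ
    omega
  have havail : avail m M Q = Finset.Icc 1 M \ blocked := by
    ext r
    rw [mem_avail]
    simp only [Finset.mem_sdiff, Finset.mem_biUnion, Finset.mem_Icc, hblocked]
    constructor
    · rintro ⟨⟨hr1, hr2⟩, hcond⟩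
      refine ⟨⟨hr1, hr2⟩, ?_⟩
      rintro ⟨ℓ, hℓ, hmem⟩
      obtain ⟨c, hc, rfl⟩ := Finset.mem_image.mp hℓ
      exact hcond c hc ((div_level_iff hm hr1).mpr hmem)
    · rintro ⟨⟨hr1, hr2⟩, hcond⟩
      refine ⟨⟨hr1, hr2⟩, ?_⟩
      intro c hc heq
      exact hcond ⟨(c.1 - 1) / m, Finset.mem_image.mpr ⟨c, hc, rfl⟩,
        (div_level_iff hm hr1).mp heq⟩
  have hIcc : (Finset.Icc 1 M).card = M := by rw [Nat.card_Icc]; omega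
  have hble : blocked.card ≤ M := hIcc ▸ Finset.card_le_card hbsub
  rw [havail, Finset.card_sdiff_of_subset hbsub, hIcc, hbcard, hLcard]
  rw [hbcard, hLcard] at hble
  exact Nat.sub_add_cancel hble

section Recursion

variable {m n : ℕ} {b : ℕ → ℕ}

set_option maxHeartbeats 2000000 in
/-- The recursion `r_{k+1}(B) = r_{k+1}(B') + (b_{n+1} - k m) r_k(B')`, in ℤ. -/
lemma plc_rec (hm : 0 < m)
    (hmono : ∀ j k, 1 ≤ j → j ≤ k → k ≤ n + 1 → b j ≤ b k)
    (hsing : IsSingletonBoard m b (n + 1)) (k : ℕ) :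
    ((plc m b (n + 1) (k + 1)).card : ℤ)
      = ((plc m b n (k + 1)).card : ℤ)
        + ((b (n + 1) : ℤ) - (m : ℤ) * (k : ℤ)) * ((plc m b n k).card : ℤ) := by
  classical
  have hmono' : ∀ j k, 1 ≤ j → j ≤ k → k ≤ n → b j ≤ b k :=
    fun j k h1 h2 h3 => hmono j k h1 h2 (h3.trans (Nat.le_succ n))
  set A : Finset (Finset (ℕ × ℕ)) :=
    (plc m b (n + 1) (k + 1)).filter (fun P => ¬ ∃ c ∈ P, c.2 = n + 1) with hA
  set B : Finset (Finset (ℕ × ℕ)) :=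
    (plc m b (n + 1) (k + 1)).filter (fun P => ∃ c ∈ P, c.2 = n + 1) with hB
  have hsplit : B.card + A.card = (plc m b (n + 1) (k + 1)).card :=
    Finset.card_filter_add_card_filter_not
      (s := plc m b (n + 1) (k + 1)) (p := fun P : Finset (ℕ × ℕ) => ∃ c ∈ P, c.2 = n + 1)
  -- A is exactly the placements on the first n columns
  have hAeq : A = plc m b n (k + 1) := by
    ext P
    constructor
    · intro hPA
      obtain ⟨hPmem, hnp⟩ := Finset.mem_filter.mp hPA
      obtain ⟨⟨hcell, hcol, hlev⟩, hcard⟩ := (mem_plc hmono).mp hPmem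
      have hnp' : ∀ c ∈ P, c.2 ≠ n + 1 := fun c hc h => hnp ⟨c, hc, h⟩
      refine (mem_plc hmono').mpr ⟨⟨fun c hc => ?_, hcol, hlev⟩, hcard⟩
      obtain ⟨h1, h2, h3, h4⟩ := hcell c hc
      exact ⟨h1, by have := hnp' c hc; omega, h3, h4⟩
    · intro hP
      obtain ⟨⟨hcell, hcol, hlev⟩, hcard⟩ := (mem_plc hmono').mp hP
      refine Finset.mem_filter.mpr
        ⟨(mem_plc hmono).mpr ⟨⟨fun c hc => ?_, hcol, hlev⟩, hcard⟩, ?_⟩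
      · obtain ⟨h1, h2, h3, h4⟩ := hcell c hc
        exact ⟨h1, by omega, h3, h4⟩
      · rintro ⟨c, hc, hcol2⟩
        have := (hcell c hc).2.1
        omega
  -- count B fiberwise over placements on the first n columns
  set f : Finset (ℕ × ℕ) → Finset (ℕ × ℕ) := fun P => P.filter (fun c => ¬ c.2 = n + 1)
    with hf
  have hmaps : ∀ P ∈ B, f P ∈ plc m b n k := by
    intro P hPB
    obtain ⟨hPmem, c0, hc0P, hc0col⟩ := Finset.mem_filter.mp hPB
    obtain ⟨⟨hcell, hcol, hlev⟩, hcard⟩ := (mem_plc hmono).mp hPmem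
    have hfilter_eq : P.filter (fun c => c.2 = n + 1) = {c0} := by
      ext c
      simp only [Finset.mem_filter, Finset.mem_singleton]
      constructor
      · rintro ⟨hc, hcc⟩
        exact hcol c hc c0 hc0P (hcc.trans hc0col.symm)
      · rintro rfl
        exact ⟨hc0P, hc0col⟩
    have hcards := Finset.card_filter_add_card_filter_not
      (s := P) (p := fun c => c.2 = n + 1)
    rw [hfilter_eq, Finset.card_singleton, hcard] at hcards
    refine (mem_plc hmono').mpr ⟨⟨?_, ?_, ?_⟩, by
      have hfPcard : (f P).card = (P.filter (fun c => ¬ c.2 = n + 1)).card := rfl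
      omega⟩
    · intro c hc
      obtain ⟨hcP, hcne⟩ := Finset.mem_filter.mp hc
      obtain ⟨h1, h2, h3, h4⟩ := hcell c hcP
      exact ⟨h1, by omega, h3, h4⟩
    · intro c hc c' hc' h
      exact hcol c (Finset.mem_of_mem_filter c hc) c' (Finset.mem_of_mem_filter c' hc') h
    · intro c hc c' hc' h
      exact hlev c (Finset.mem_of_mem_filter c hc) c' (Finset.mem_of_mem_filter c' hc') h
  have hfiber : ∀ Q ∈ plc m b n k,
      (B.filter (fun P => f P = Q)).card + k * m = b (n + 1) := by
    intro Q hQmem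
    obtain ⟨hQpl, hQcard⟩ := (mem_plc hmono').mp hQmem
    have hQfull : ∀ c ∈ Q, ((c.1 - 1) / m) * m + m ≤ b (n + 1) :=
      fun c hc => level_full hm hmono hsing hQpl hc
    have hQcolle : ∀ c ∈ Q, c.2 ≤ n := fun c hc => (hQpl.1 c hc).2.1
    have hnotmem : ∀ r : ℕ, (r, n + 1) ∉ Q := by
      intro r hmem
      have := hQcolle _ hmem
      simp at this
    -- the fiber over Q
    have hfib_eq : B.filter (fun P => f P = Q)
        = (avail m (b (n + 1)) Q).image (fun r => insert (r, n + 1) Q) := by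
      ext P
      constructor
      · intro hPmem2
        obtain ⟨hPB, hfPQ⟩ := Finset.mem_filter.mp hPmem2
        obtain ⟨hPmem, c0, hc0P, hc0col⟩ := Finset.mem_filter.mp hPB
        obtain ⟨⟨hcell, hcol, hlev⟩, hcard⟩ := (mem_plc hmono).mp hPmem
        obtain ⟨h1, h2, h3, h4⟩ := hcell c0 hc0P
        have hr4 : c0.1 ≤ b (n + 1) := by rwa [hc0col] at h4
        refine Finset.mem_image.mpr ⟨c0.1, ?_, ?_⟩
        · refine mem_avail.mpr ⟨⟨h3, hr4⟩, ?_⟩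
          intro c hc heq
          have hcP : c ∈ P := by
            rw [← hfPQ] at hc
            exact Finset.mem_of_mem_filter c hc
          have hcne : ¬ c.2 = n + 1 := by
            rw [← hfPQ] at hc
            exact (Finset.mem_filter.mp hc).2
          have hceq := hlev c0 hc0P c hcP heq
          exact hcne (hceq ▸ hc0col)
        · -- insert (c0.1, n+1) Q = P
          have hc0eq : ((c0.1, n + 1) : ℕ × ℕ) = c0 := by
            rw [← hc0col]
          rw [hc0eq, ← hfPQ]
          ext c
          simp only [Finset.mem_insert, hf, Finset.mem_filter]
          constructor
          · rintro (rfl | ⟨hc, _⟩)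
            · exact hc0P
            · exact hc
          · intro hc
            by_cases hcc : c.2 = n + 1
            · exact Or.inl (hcol c hc c0 hc0P (hcc.trans hc0col.symm))
            · exact Or.inr ⟨hc, hcc⟩
      · intro hPmem2
        obtain ⟨r, hr, rfl⟩ := Finset.mem_image.mp hPmem2
        obtain ⟨⟨hr1, hr2⟩, hrlev⟩ := mem_avail.mp hr
        have hnotm := hnotmem r
        have hcardP : (insert (r, n + 1) Q).card = k + 1 := by
          rw [Finset.card_insert_of_notMem hnotm, hQcard]
        have hplP : IsMLevelPlacement m b (n + 1) (insert (r, n + 1) Q) := by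
          refine ⟨?_, ?_, ?_⟩
          · intro c hc
            rcases Finset.mem_insert.mp hc with rfl | hc
            · exact ⟨by omega, le_rfl, hr1, hr2⟩
            · obtain ⟨h1, h2, h3, h4⟩ := hQpl.1 c hc
              exact ⟨h1, by omega, h3, h4⟩
          · intro c hc c' hc' h
            rcases Finset.mem_insert.mp hc with rfl | hc
            · rcases Finset.mem_insert.mp hc' with rfl | hc'
              · rfl
              · exfalso
                have h1 : n + 1 = c'.2 := h
                have := hQcolle c' hc'
                omega
            · rcases Finset.mem_insert.mp hc' with rfl | hc'
              · exfalso
                have h1 : c.2 = n + 1 := h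
                have := hQcolle c hc
                omega
              · exact hQpl.2.1 c hc c' hc' h
          · intro c hc c' hc' h
            rcases Finset.mem_insert.mp hc with rfl | hc
            · rcases Finset.mem_insert.mp hc' with rfl | hc'
              · rfl
              · exact absurd h (hrlev c' hc')
            · rcases Finset.mem_insert.mp hc' with rfl | hc'
              · exact absurd h.symm (hrlev c hc)
              · exact hQpl.2.2 c hc c' hc' h
        refine Finset.mem_filter.mpr ⟨Finset.mem_filter.mpr ⟨?_, ?_⟩, ?_⟩
        · exact (mem_plc hmono).mpr ⟨hplP, hcardP⟩
        · exact ⟨(r, n + 1), Finset.mem_insert_self _ _, rfl⟩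
        · show (insert (r, n + 1) Q).filter (fun c => ¬ c.2 = n + 1) = Q
          rw [Finset.filter_insert]
          rw [if_neg (by simp)]
          exact Finset.filter_true_of_mem (fun c hc => by
            have := hQcolle c hc; omega)
    have hinj2 : Set.InjOn (fun r => insert (r, n + 1) Q)
        ↑(avail m (b (n + 1)) Q) := by
      intro r hr r' hr' heq
      have heq' : insert (r, n + 1) Q = insert (r', n + 1) Q := heq
      have h1 : ((r, n + 1) : ℕ × ℕ) ∈ insert ((r' : ℕ), n + 1) Q := by
        rw [← heq']; exact Finset.mem_insert_self _ _
      rcases Finset.mem_insert.mp h1 with h | h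
      · exact congrArg Prod.fst h
      · exact absurd h (hnotmem r)
    rw [hfib_eq, Finset.card_image_of_injOn hinj2]
    have := avail_card hm hQpl.2.2 hQfull
    rw [hQcard] at this
    exact this
  -- sum up fibers
  have hBcard : B.card = ∑ Q ∈ plc m b n k, (B.filter (fun P => f P = Q)).card :=
    Finset.card_eq_sum_card_fiberwise hmaps
  -- integer computation
  have hBint : (B.card : ℤ)
      = ((plc m b n k).card : ℤ) * ((b (n + 1) : ℤ) - (m : ℤ) * (k : ℤ)) := by
    rcases (plc m b n k).eq_empty_or_nonempty with he | ⟨Q, hQ⟩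
    · rw [hBcard, he]
      simp
    · have hbound := hfiber Q hQ
      have hkm : k * m ≤ b (n + 1) :=
        Nat.le.intro ((Nat.add_comm _ _).trans hbound)
      have hconst : ∀ Q ∈ plc m b n k,
          (B.filter (fun P => f P = Q)).card = b (n + 1) - k * m :=
        fun Q hQ => Nat.eq_sub_of_add_eq (hfiber Q hQ)
      rw [hBcard, Finset.sum_congr rfl hconst, Finset.sum_const, smul_eq_mul]
      push_cast [Nat.cast_sub hkm]
      ring
  have hcast : ((plc m b (n + 1) (k + 1)).card : ℤ) = (B.card : ℤ) + (A.card : ℤ) := by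
    exact_mod_cast congrArg (Nat.cast (R := ℤ)) hsplit.symm
  rw [hcast, hBint, hAeq]
  ring
end Recursion

/-- The Briggs–Remmel theorem: if `B = (b_1,…,b_n)` is a singleton board, then
`∑_k r_{k,m}(B) x↓_{n-k,m} = ∏_{j=1}^n (x + b_j − (j−1)m)`. -/
theorem briggs_remmel (m n : ℕ) (hm : 0 < m) (b : ℕ → ℕ)
    (hmono : ∀ j k, 1 ≤ j → j ≤ k → k ≤ n → b j ≤ b k)
    (hsing : IsSingletonBoard m b n) (x : ℤ) :
    ∑ k ∈ Finset.range (n + 1), (rkm m b n k : ℤ) * fallFact x (n - k) m =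
      ∏ j ∈ Finset.Icc 1 n, (x + (b j : ℤ) - (m : ℤ) * ((j : ℤ) - 1)) := by
  revert hmono hsing
  induction n with
  | zero =>
      intro hmono hsing
      simp only [Nat.zero_add, Finset.range_one, Finset.sum_singleton, Nat.zero_sub]
      rw [rkm_eq_card hmono, plc_zero]
      simp [fallFact]
  | succ n ih =>
      intro hmono hsing
      have hmono' : ∀ j k, 1 ≤ j → j ≤ k → k ≤ n → b j ≤ b k :=
        fun j k h1 h2 h3 => hmono j k h1 h2 (h3.trans (Nat.le_succ n))
      have hsing' : IsSingletonBoard m b n :=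
        fun j h1 h2 h3 => hsing j h1 (h2.trans (Nat.lt_succ_self n)) h3
      have ih' := ih hmono' hsing'
      set β : ℤ := (b (n + 1) : ℤ) with hβ
      set T : ℕ → ℤ := fun k => ((plc m b n k).card : ℤ) with hT
      have hrkm : ∀ k, (rkm m b (n + 1) k : ℤ) = ((plc m b (n + 1) k).card : ℤ) :=
        fun k => by rw [rkm_eq_card hmono]
      have hrkm' : ∀ k, (rkm m b n k : ℤ) = T k := fun k => by rw [rkm_eq_card hmono']
      have hrec : ∀ k : ℕ, ((plc m b (n + 1) (k + 1)).card : ℤ)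
          = T (k + 1) + (β - (m : ℤ) * (k : ℤ)) * T k :=
        fun k => plc_rec hm hmono hsing k
      have h0 : ((plc m b (n + 1) 0).card : ℤ) = T 0 := by
        simp only [hT]
        rw [plc_zero, plc_zero]
      have hTtop : T (n + 1) = 0 := by
        rw [hT]
        simp [plc_eq_empty_of_gt (Nat.lt_succ_self n)]
      have hff : ∀ j : ℕ, fallFact x (j + 1) m = fallFact x j m * (x - (m : ℤ) * j) :=
        fun j => Finset.prod_range_succ _ j
      -- rewrite the sum
      calc ∑ k ∈ Finset.range (n + 1 + 1), (rkm m b (n + 1) k : ℤ)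
            * fallFact x (n + 1 - k) m
          = (∑ k ∈ Finset.range (n + 1), ((plc m b (n + 1) (k + 1)).card : ℤ)
              * fallFact x (n - k) m)
            + ((plc m b (n + 1) 0).card : ℤ) * fallFact x (n + 1) m := by
            rw [Finset.sum_range_succ' (fun k => (rkm m b (n + 1) k : ℤ)
              * fallFact x (n + 1 - k) m) (n + 1)]
            simp only [hrkm, Nat.succ_sub_succ, Nat.sub_zero]
        _ = (∑ k ∈ Finset.range (n + 1),
              (T (k + 1) * fallFact x (n - k) m
                + (β - (m : ℤ) * (k : ℤ)) * (T k * fallFact x (n - k) m)))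
            + T 0 * fallFact x (n + 1) m := by
            rw [h0]
            congr 1
            refine Finset.sum_congr rfl (fun k _ => ?_)
            rw [hrec k]
            ring
        _ = ((∑ k ∈ Finset.range (n + 1), T (k + 1) * fallFact x (n - k) m)
              + T 0 * fallFact x (n + 1) m)
            + ∑ k ∈ Finset.range (n + 1),
                (β - (m : ℤ) * (k : ℤ)) * (T k * fallFact x (n - k) m) := by
            rw [Finset.sum_add_distrib]
            ring
        _ = (∑ k ∈ Finset.range (n + 1 + 1), T k * fallFact x (n + 1 - k) m)
            + ∑ k ∈ Finset.range (n + 1),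
                (β - (m : ℤ) * (k : ℤ)) * (T k * fallFact x (n - k) m) := by
            congr 1
            rw [Finset.sum_range_succ' (fun k => T k * fallFact x (n + 1 - k) m) (n + 1)]
            simp only [Nat.succ_sub_succ, Nat.sub_zero]
        _ = (∑ k ∈ Finset.range (n + 1), T k * fallFact x (n + 1 - k) m)
            + ∑ k ∈ Finset.range (n + 1),
                (β - (m : ℤ) * (k : ℤ)) * (T k * fallFact x (n - k) m) := by
            rw [Finset.sum_range_succ]
            rw [hTtop]
            ring
        _ = ∑ k ∈ Finset.range (n + 1),
              (x + β - (m : ℤ) * (n : ℤ)) * (T k * fallFact x (n - k) m) := by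
            rw [← Finset.sum_add_distrib]
            refine Finset.sum_congr rfl (fun k hk => ?_)
            have hkn : k ≤ n := Nat.lt_succ_iff.mp (Finset.mem_range.mp hk)
            have h1 : n + 1 - k = (n - k) + 1 := by omega
            rw [h1, hff (n - k)]
            have h2 : ((n - k : ℕ) : ℤ) = (n : ℤ) - (k : ℤ) := by
              rw [Nat.cast_sub hkn]
            rw [h2]
            ring
        _ = (x + β - (m : ℤ) * (n : ℤ))
            * ∑ k ∈ Finset.range (n + 1), T k * fallFact x (n - k) m := by
            rw [Finset.mul_sum]
        _ = (x + β - (m : ℤ) * (n : ℤ))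
            * ∏ j ∈ Finset.Icc 1 n, (x + (b j : ℤ) - (m : ℤ) * ((j : ℤ) - 1)) := by
            rw [← ih']
            congr 1
            exact Finset.sum_congr rfl (fun k _ => by rw [hrkm' k])
        _ = ∏ j ∈ Finset.Icc 1 (n + 1), (x + (b j : ℤ) - (m : ℤ) * ((j : ℤ) - 1)) := by
            rw [Finset.prod_Icc_succ_top (Nat.le_add_left 1 n)]
            push_cast
            ring
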